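/- Let E be an approval election with n voters and candidates c_1, …, c_m that has candidate interval (CI) preferences with respect to this ordering, let k be the committee size, let ℓ be a positive integer, and let x be an integer with x ≥ ⌈ℓ·n/k⌉. Fix an index j with 1 ≤ j ≤ m − ℓ + 1. Let L₂ be the set of voters who approve all of the candidates c_j, …, c_{j+ℓ−1} and approve no candidate c_p with p < j, and let L₁ be the set of voters who approve all of the candidates c_j, …, c_{j+ℓ−1} and approve at least one candidate c_p with p < j. Then the number of ℓ-cohesive groups of size exactly x for which c_j is the smallest-index candidate approved by all members of the group equals Σ_{t=1}^{min(|L₂|, x)} C(|L₂|, t) · C(|L₁|, x − t), where C(·,·) denotes the binomial coefficient. -/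

import Mathlib

/-- `X` is an `ℓ`-cohesive group in the approval election whose candidates are
`c_1, …, c_m`, identified with `0, …, m-1 : ℕ`, with approval function `A`,
`n` voters and committee size `k`: `|X| ≥ ℓ·n/k` and at least `ℓ` candidates
are approved by every member of `X`. -/
def IsCohesiveN {V : Type*} (m : ℕ) (A : V → Finset ℕ) (n k ℓ : ℕ) (X : Finset V) : Prop :=
  (ℓ : ℝ) * n / k ≤ X.card ∧
    ℓ ≤ ((Finset.range m).filter (fun c => ∀ v ∈ X, c ∈ A v)).card

theorem stmt18 {V : Type*} [Fintype V] [DecidableEq V] [Nonempty V] (m : ℕ)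
    (A : V → Finset ℕ)
    (hrange : ∀ v, A v ⊆ Finset.range m)
    (hCI : ∀ v, ∀ a b c : ℕ, a ≤ b → b ≤ c → a ∈ A v → c ∈ A v → b ∈ A v)
    (k ℓ x : ℕ) (hk : 0 < k) (hℓ : 0 < ℓ)
    (hx : ⌈(ℓ : ℝ) * Fintype.card V / k⌉₊ ≤ x)
    (j : ℕ) (hj : j + ℓ ≤ m)
    (L₁ L₂ : Finset V)
    (hL₂ : L₂ = Finset.univ.filter
      (fun v => Finset.Ico j (j + ℓ) ⊆ A v ∧ ∀ p < j, p ∉ A v))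
    (hL₁ : L₁ = Finset.univ.filter
      (fun v => Finset.Ico j (j + ℓ) ⊆ A v ∧ ∃ p < j, p ∈ A v)) :
    {X : Finset V | IsCohesiveN m A (Fintype.card V) k ℓ X ∧ X.card = x ∧
        (∀ v ∈ X, j ∈ A v) ∧ ∀ p < j, ∃ v ∈ X, p ∉ A v}.ncard =
      ∑ t ∈ Finset.Icc 1 (min L₂.card x), Nat.choose L₂.card t * Nat.choose L₁.card (x - t) := by
  classical
  have hmemL₂ : ∀ v, v ∈ L₂ ↔ (Finset.Ico j (j + ℓ) ⊆ A v ∧ ∀ p < j, p ∉ A v) := by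
    intro v; rw [hL₂]; simp
  have hmemL₁ : ∀ v, v ∈ L₁ ↔ (Finset.Ico j (j + ℓ) ⊆ A v ∧ ∃ p < j, p ∈ A v) := by
    intro v; rw [hL₁]; simp
  have hdisj : Disjoint L₁ L₂ := by
    rw [Finset.disjoint_left]
    intro v hv1 hv2
    obtain ⟨-, p, hp, hpA⟩ := (hmemL₁ v).1 hv1
    exact ((hmemL₂ v).1 hv2).2 p hp hpA
  -- positivity of x
  have hnpos : 0 < Fintype.card V := Fintype.card_pos
  have hrpos : (0:ℝ) < (ℓ : ℝ) * Fintype.card V / k := by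
    have hk' : (0:ℝ) < k := by exact_mod_cast hk
    have hl' : (0:ℝ) < ℓ := by exact_mod_cast hℓ
    have hn' : (0:ℝ) < Fintype.card V := by exact_mod_cast hnpos
    exact div_pos (mul_pos hl' hn') hk'
  have hx1 : 1 ≤ x := le_trans (Nat.ceil_pos.2 hrpos) hx
  -- the main set equality
  have key : {X : Finset V | IsCohesiveN m A (Fintype.card V) k ℓ X ∧ X.card = x ∧
        (∀ v ∈ X, j ∈ A v) ∧ ∀ p < j, ∃ v ∈ X, p ∉ A v} =
      ↑(Finset.univ.filter (fun X : Finset V =>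
          X ⊆ L₁ ∪ L₂ ∧ (X ∩ L₂).Nonempty ∧ X.card = x)) := by
    ext X
    simp only [Finset.coe_filter, Set.mem_setOf_eq, Finset.mem_univ, true_and]
    constructor
    · rintro ⟨⟨hsize, hcom⟩, hcard, hj0, hmin⟩
      have hcom' : ℓ ≤ (@Finset.filter ℕ (fun c => ∀ v ∈ X, c ∈ A v)
          (fun _ => Finset.decidableDforallFinset) (Finset.range m)).card := hcom
      set S := @Finset.filter ℕ (fun c => ∀ v ∈ X, c ∈ A v)
          (fun _ => Finset.decidableDforallFinset) (Finset.range m) with hS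
      have hgej : ∀ c ∈ S, j ≤ c := by
        intro c hc
        by_contra hlt
        push_neg at hlt
        obtain ⟨v, hv, hvc⟩ := hmin c hlt
        rw [hS] at hc
        simp only [Finset.mem_filter] at hc
        exact hvc (hc.2 v hv)
      have hbig : ∃ c ∈ S, j + ℓ - 1 ≤ c := by
        by_contra h
        push_neg at h
        have hsub : S ⊆ Finset.Ico j (j + ℓ - 1) := fun c hc =>
          Finset.mem_Ico.2 ⟨hgej c hc, h c hc⟩
        have h2 := Finset.card_le_card hsub
        rw [Nat.card_Ico] at h2
        omega
      obtain ⟨c, hcS, hcge⟩ := hbig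
      rw [hS] at hcS
      simp only [Finset.mem_filter] at hcS
      have hcA : ∀ v ∈ X, c ∈ A v := hcS.2
      have happ : ∀ v ∈ X, Finset.Ico j (j + ℓ) ⊆ A v := by
        intro v hv b hb
        rw [Finset.mem_Ico] at hb
        exact hCI v j b c hb.1 (by omega) (hj0 v hv) (hcA v hv)
      refine ⟨?_, ?_, hcard⟩
      · intro v hv
        rw [Finset.mem_union, hmemL₁, hmemL₂]
        by_cases h : ∃ p < j, p ∈ A v
        · exact Or.inl ⟨happ v hv, h⟩
        · push_neg at h
          exact Or.inr ⟨happ v hv, h⟩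
      · rcases Nat.eq_zero_or_pos j with hj0' | hj0'
        · have hXne : X.Nonempty := Finset.card_pos.1 (by omega)
          obtain ⟨v, hv⟩ := hXne
          refine ⟨v, Finset.mem_inter.2 ⟨hv, (hmemL₂ v).2 ⟨happ v hv, ?_⟩⟩⟩
          intro p hp; omega
        · obtain ⟨v, hv, hvj⟩ := hmin (j - 1) (by omega)
          refine ⟨v, Finset.mem_inter.2 ⟨hv, (hmemL₂ v).2 ⟨happ v hv, ?_⟩⟩⟩
          intro p hp hpA
          exact hvj (hCI v p (j - 1) j (by omega) (by omega) hpA (hj0 v hv))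
    · rintro ⟨hsub, hne, hcard⟩
      have happ : ∀ v ∈ X, Finset.Ico j (j + ℓ) ⊆ A v := by
        intro v hv
        rcases Finset.mem_union.1 (hsub hv) with h | h
        · exact ((hmemL₁ v).1 h).1
        · exact ((hmemL₂ v).1 h).1
      have hj0 : ∀ v ∈ X, j ∈ A v := fun v hv =>
        happ v hv (Finset.mem_Ico.2 ⟨le_refl j, by omega⟩)
      refine ⟨⟨?_, ?_⟩, hcard, hj0, ?_⟩
      · calc (ℓ : ℝ) * Fintype.card V / k ≤ ⌈(ℓ : ℝ) * Fintype.card V / k⌉₊ :=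
              Nat.le_ceil _
          _ ≤ X.card := by rw [hcard]; exact_mod_cast hx
      · have hIco : (Finset.Ico j (j + ℓ)).card = ℓ := by rw [Nat.card_Ico]; omega
        rw [← hIco]
        refine Finset.card_le_card fun c hc => ?_
        rw [Finset.mem_Ico] at hc
        simp only [Finset.mem_filter]
        exact ⟨Finset.mem_range.2 (by omega),
          fun v hv => happ v hv (Finset.mem_Ico.2 hc)⟩
      · intro p hp
        obtain ⟨v, hv⟩ := hne
        rw [Finset.mem_inter] at hv
        exact ⟨v, hv.1, ((hmemL₂ v).1 hv.2).2 p hp⟩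
  rw [key, Set.ncard_coe_finset]
  -- counting
  rw [Finset.card_eq_sum_card_fiberwise
    (f := fun X : Finset V => (X ∩ L₂).card) (t := Finset.Icc 1 (min L₂.card x)) ?side]
  case side =>
    intro X hX
    simp only [Finset.mem_coe, Finset.mem_filter, Finset.mem_univ, true_and] at hX
    obtain ⟨hsub, hne, hcard⟩ := hX
    rw [Finset.mem_coe, Finset.mem_Icc]
    refine ⟨Finset.card_pos.2 hne, le_min (Finset.card_le_card Finset.inter_subset_right) ?_⟩
    rw [← hcard]
    exact Finset.card_le_card Finset.inter_subset_left
  refine Finset.sum_congr rfl fun t ht => ?_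
  rw [Finset.mem_Icc] at ht
  have htx : t ≤ x := le_trans ht.2 (min_le_right _ _)
  rw [← Finset.card_powersetCard, ← Finset.card_powersetCard, ← Finset.card_product]
  apply Finset.card_nbij' (fun X => (X ∩ L₂, X ∩ L₁)) (fun p => p.1 ∪ p.2)
  · intro X hX
    simp only [Finset.mem_coe, Finset.mem_filter, Finset.mem_univ, true_and] at hX
    obtain ⟨⟨hsub, hne, hcard⟩, hfib⟩ := hX
    have hXeq : X ∩ L₂ ∪ X ∩ L₁ = X := by
      rw [← Finset.inter_union_distrib_left]
      exact Finset.inter_eq_left.2 (by rwa [Finset.union_comm] at hsub)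
    have hdisjX : Disjoint (X ∩ L₂) (X ∩ L₁) :=
      hdisj.symm.mono Finset.inter_subset_right Finset.inter_subset_right
    have hsum : (X ∩ L₂).card + (X ∩ L₁).card = x := by
      rw [← Finset.card_union_of_disjoint hdisjX, hXeq, hcard]
    simp only [Finset.mem_coe, Finset.mem_product, Finset.mem_powersetCard]
    exact ⟨⟨Finset.inter_subset_right, hfib⟩,
      ⟨Finset.inter_subset_right, by omega⟩⟩
  · intro p hp
    simp only [Finset.mem_coe, Finset.mem_product, Finset.mem_powersetCard] at hp
    obtain ⟨⟨hp2, hc2⟩, ⟨hp1, hc1⟩⟩ := hp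
    have hd : Disjoint p.1 p.2 := hdisj.symm.mono hp2 hp1
    have h1 : (p.1 ∪ p.2) ∩ L₂ = p.1 := by
      rw [Finset.union_inter_distrib_right, Finset.inter_eq_left.2 hp2,
        Finset.disjoint_iff_inter_eq_empty.1 (Finset.disjoint_left.mpr
          (fun a ha => Finset.disjoint_left.1 hdisj (hp1 ha))), Finset.union_empty]
    simp only [Finset.mem_coe, Finset.mem_filter, Finset.mem_univ, true_and]
    refine ⟨⟨?_, ?_, ?_⟩, by rw [h1, hc2]⟩
    · exact Finset.union_subset (hp2.trans Finset.subset_union_right)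
        (hp1.trans Finset.subset_union_left)
    · rw [h1]
      refine Finset.card_pos.1 ?_
      omega
    · rw [Finset.card_union_of_disjoint hd, hc1, hc2]; omega
  · intro X hX
    simp only [Finset.mem_coe, Finset.mem_filter, Finset.mem_univ, true_and] at hX
    obtain ⟨⟨hsub, -, -⟩, -⟩ := hX
    show X ∩ L₂ ∪ X ∩ L₁ = X
    rw [← Finset.inter_union_distrib_left]
    exact Finset.inter_eq_left.2 (by rwa [Finset.union_comm] at hsub)
  · intro p hp
    simp only [Finset.mem_coe, Finset.mem_product, Finset.mem_powersetCard] at hp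
    obtain ⟨⟨hp2, hc2⟩, ⟨hp1, hc1⟩⟩ := hp
    have h1 : (p.1 ∪ p.2) ∩ L₂ = p.1 := by
      rw [Finset.union_inter_distrib_right, Finset.inter_eq_left.2 hp2,
        Finset.disjoint_iff_inter_eq_empty.1 (Finset.disjoint_left.mpr
          (fun a ha => Finset.disjoint_left.1 hdisj (hp1 ha))), Finset.union_empty]
    have h2 : (p.1 ∪ p.2) ∩ L₁ = p.2 := by
      rw [Finset.union_inter_distrib_right, Finset.inter_eq_left.2 hp1,
        Finset.disjoint_iff_inter_eq_empty.1 (Finset.disjoint_left.mpr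
          (fun a ha => Finset.disjoint_left.1 hdisj.symm (hp2 ha))), Finset.empty_union]
    exact Prod.ext h1 h2
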